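/- Let ℋ be a Hamel basis of ℝ over ℚ, let I, J ⊆ ℝ be nondegenerate intervals such that J∖I has nonempty interior, and for each h ∈ ℋ let f_h(x) = e^{hx}. If a finite algebraic combination F = Σᵢ λᵢ Πⱼ f_{h_j}^{k_{j,i}} (with distinct h₁,…,h_m ∈ ℋ, distinct nonzero exponent tuples, and the convention that F is multiplied by χ_{σ∪I} for some fixed set σ ⊆ J∖I) vanishes identically on I, then λᵢ = 0 for all i. In particular, the functions {f_h · χ_{σ∪I} : h ∈ ℋ} are algebraically independent, giving 𝔠-many algebraically independent generators. -/

import Mathlib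

open Cardinal

/-- For a Hamel basis `ℋ` of `ℝ` over `ℚ`, intervals `I, J` with `J ∖ I` having nonempty
interior, and `σ ⊆ J ∖ I`: if a finite algebraic combination of the functions
`f_h · χ_{σ ∪ I}` (with `f_h(x) = e^{hx}`, distinct basis elements `h_j`, distinct
nonzero exponent tuples) vanishes on `I`, then all coefficients vanish; the family
`{f_h · χ_{σ∪I} : h ∈ ℋ}` is algebraically independent, and `card(ℋ) = 𝔠`. -/
theorem stmt_17 {ι : Type} (B : Module.Basis ι ℚ ℝ)
    (I J : Set ℝ) (hI : I.OrdConnected) (hInd : ∃ p ∈ I, ∃ q ∈ I, p < q)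
    (hJ : J.OrdConnected) (hJnd : ∃ p ∈ J, ∃ q ∈ J, p < q)
    (hint : (interior (J \ I)).Nonempty)
    (σ : Set ℝ) (hσ : σ ⊆ J \ I)
    (m n : ℕ) (e : Fin m → ι) (he : Function.Injective e)
    (k : Fin n → Fin m → ℕ) (hk1 : ∀ i, 1 ≤ ∑ j, k i j)
    (hkdist : Function.Injective k)
    (l : Fin n → ℝ)
    (h : ∀ x ∈ I,
      ∑ i, l i * ∏ j,
        (Set.indicator (σ ∪ I) (fun y => Real.exp (B (e j) * y)) x) ^ (k i j) = 0) :
    (∀ i, l i = 0) ∧ #ι = Cardinal.continuum := by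
  constructor
  · -- the exponents
    set β : Fin n → ℝ := fun i => ∑ j, (k i j : ℝ) * B (e j) with hβ
    -- β is injective
    have hβinj : Function.Injective β := by
      intro i i' hii
      apply hkdist
      funext j
      have hli : LinearIndependent ℚ (B ∘ e) := B.linearIndependent.comp e he
      have := Fintype.linearIndependent_iff.mp hli
        (fun j => (k i j : ℚ) - (k i' j : ℚ)) ?_ j
      · have : ((k i j : ℚ)) = (k i' j : ℚ) := by linarith [this]
        exact_mod_cast this
      · have : (∑ j, (k i j : ℝ) * B (e j)) - (∑ j, (k i' j : ℝ) * B (e j)) = 0 := by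
          have hii' : (∑ j, (k i j : ℝ) * B (e j)) = ∑ j, (k i' j : ℝ) * B (e j) := hii
          rw [hii']; ring
        rw [← Finset.sum_sub_distrib] at this
        simpa [Rat.smul_def, Function.comp, sub_mul] using this
    -- on I the sum is a sum of exponentials
    have key : ∀ x ∈ I, ∑ i, l i * Real.exp (β i * x) = 0 := by
      intro x hx
      have hx' : x ∈ σ ∪ I := Or.inr hx
      have := h x hx
      rw [← this]
      refine Finset.sum_congr rfl fun i _ => ?_
      congr 1
      simp only [Set.indicator_of_mem hx']
      rw [show β i * x = ∑ j, (k i j : ℝ) * (B (e j) * x) by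
        rw [hβ, Finset.sum_mul]; exact Finset.sum_congr rfl fun j _ => by ring]
      rw [Real.exp_sum]
      exact Finset.prod_congr rfl fun j _ => by rw [Real.exp_nat_mul]
    -- the function is analytic, so it vanishes everywhere
    set g : ℝ → ℝ := fun x => ∑ i, l i * Real.exp (β i * x) with hg
    have hga : AnalyticOnNhd ℝ g Set.univ := by
      intro x _
      apply Finset.analyticAt_fun_sum
      intro i _
      exact analyticAt_const.mul
        (analyticAt_rexp.comp ((analyticAt_const.mul analyticAt_id)))
    obtain ⟨p, hp, q, hq, hpq⟩ := hInd
    set z₀ : ℝ := (p + q) / 2 with hz₀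
    have hz₀I : Set.Ioo p q ⊆ I := fun y hy =>
      hI.out hp hq ⟨le_of_lt hy.1, le_of_lt hy.2⟩
    have hz₀mem : z₀ ∈ Set.Ioo p q := ⟨by linarith, by linarith⟩
    have hfreq : ∃ᶠ z in nhdsWithin z₀ {z₀}ᶜ, g z = 0 := by
      have hnb : Set.Ioo p q ∈ nhdsWithin z₀ {z₀}ᶜ :=
        nhdsWithin_le_nhds (isOpen_Ioo.mem_nhds hz₀mem)
      apply Filter.Eventually.frequently
      filter_upwards [hnb] with z hz
      exact key z (hz₀I hz)
    have hzero : Set.EqOn g 0 Set.univ :=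
      hga.eqOn_zero_of_preconnected_of_frequently_eq_zero isPreconnected_univ
        (Set.mem_univ z₀) hfreq
    -- characters
    set χ : Fin n → (Multiplicative ℝ →* ℝ) := fun i =>
      { toFun := fun x => Real.exp (β i * Multiplicative.toAdd x)
        map_one' := by simp
        map_mul' := fun x y => by
          simp [mul_add, Real.exp_add] } with hχ
    have hχinj : Function.Injective χ := by
      intro i i' hii
      apply hβinj
      have := DFunLike.congr_fun hii (Multiplicative.ofAdd (1 : ℝ))
      simp only [hχ, MonoidHom.coe_mk, OneHom.coe_mk, toAdd_ofAdd, mul_one] at this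
      exact Real.exp_injective this
    have hli : LinearIndependent ℝ (fun i => ((χ i : Multiplicative ℝ → ℝ))) :=
      (linearIndependent_monoidHom (Multiplicative ℝ) ℝ).comp χ hχinj
    have := Fintype.linearIndependent_iff.mp hli l ?_
    · exact this
    · funext x
      have := hzero (Set.mem_univ (Multiplicative.toAdd x))
      simpa [hχ, hg] using this
  · rw [B.mk_eq_rank'', Real.rank_rat_real]
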